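/- Let S = ⟨s/t_1, ..., s/t_k⟩ with t_1 > ... > t_k > 1 pairwise coprime and s = t_1⋯t_k. Then for every n ∈ S with |L(n)| ≥ 2, LD(n) ≥ (k-1)/(t_1 - t_k), and consequently LD(S) = (k-1)/(t_1 - t_k). -/

import Mathlib

open Finset

namespace LengthDensity

/-- The set of factorizations of `n` with respect to generators `g`. -/
def facs {k : ℕ} (g : Fin k → ℕ) (n : ℕ) : Set (Fin k → ℕ) :=
  {z | ∑ i, z i * g i = n}

/-- Membership in the numerical semigroup generated by `g`. -/
def mem {k : ℕ} (g : Fin k → ℕ) (n : ℕ) : Prop := (facs g n).Nonempty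

/-- The set of factorization lengths of `n`. -/
def lengthSet {k : ℕ} (g : Fin k → ℕ) (n : ℕ) : Set ℕ :=
  (fun z => ∑ i, z i) '' facs g n

/-- Length density of an element. -/
noncomputable def LD {k : ℕ} (g : Fin k → ℕ) (n : ℕ) : ℝ :=
  (((lengthSet g n).ncard : ℝ) - 1) /
    (((sSup (lengthSet g n) : ℕ) : ℝ) - ((sInf (lengthSet g n) : ℕ) : ℝ))

/-- Length density of the semigroup: infimum of `LD` over elements with
non-singleton length set. -/
noncomputable def LDsgp {k : ℕ} (g : Fin k → ℕ) : ℝ :=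
  sInf {x : ℝ | ∃ n : ℕ, 2 ≤ (lengthSet g n).ncard ∧ x = LD g n}

/-- The delta set (successive gaps) of a set of naturals. -/
def deltaOf (L : Set ℕ) : Set ℕ :=
  {d | ∃ a ∈ L, ∃ b ∈ L, a < b ∧ (∀ c ∈ L, ¬(a < c ∧ c < b)) ∧ d = b - a}

/-- The delta set of an element. -/
def delta {k : ℕ} (g : Fin k → ℕ) (n : ℕ) : Set ℕ := deltaOf (lengthSet g n)

/-- The delta set of the semigroup. -/
def Delta {k : ℕ} (g : Fin k → ℕ) : Set ℕ := ⋃ n : ℕ, delta g n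

/-- Adjacency in the factorization graph of `n`: two factorizations of `n`
sharing a positive coordinate. -/
def adj {k : ℕ} (g : Fin k → ℕ) (n : ℕ) (z z' : Fin k → ℕ) : Prop :=
  z ∈ facs g n ∧ z' ∈ facs g n ∧ ∃ i, 0 < z i ∧ 0 < z' i

/-- `n` is a Betti element: its factorization graph is disconnected. -/
def IsBetti {k : ℕ} (g : Fin k → ℕ) (n : ℕ) : Prop :=
  ∃ z ∈ facs g n, ∃ z' ∈ facs g n, ¬ Relation.ReflTransGen (adj g n) z z'

/-- The semigroup is tasty: `LD(S) > 1 / max Δ(S)`. -/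
def Tasty {k : ℕ} (g : Fin k → ℕ) : Prop := LDsgp g > 1 / ((sSup (Delta g) : ℕ) : ℝ)

/-- The semigroup is bland: `LD(S) = 1 / max Δ(S)`. -/
def Bland {k : ℕ} (g : Fin k → ℕ) : Prop := LDsgp g = 1 / ((sSup (Delta g) : ℕ) : ℝ)

/-- `g` is a minimal generating set: no generator is a nonnegative integer
combination of the others. -/
def IsMinGen {k : ℕ} (g : Fin k → ℕ) : Prop :=
  ∀ i, ¬ ∃ z : Fin k → ℕ, z i = 0 ∧ ∑ j, z j * g j = g i

/-- `n` is a non-atom of the semigroup generated by `g`: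
it is a sum of two nonzero elements. -/
def NonAtom {k : ℕ} (g : Fin k → ℕ) (n : ℕ) : Prop :=
  ∃ a b : ℕ, 0 < a ∧ 0 < b ∧ mem g a ∧ mem g b ∧ n = a + b

variable {k : ℕ}


/-- the supersymmetric generators -/
def gen (t : Fin (k+1) → ℕ) : Fin (k+1) → ℕ := fun i => (∏ j, t j) / t i

lemma gen_mul (t : Fin (k+1) → ℕ) (htpos : ∀ i, 0 < t i) (i : Fin (k+1)) :
    gen t i * t i = ∏ j, t j :=
  Nat.div_mul_cancel (Finset.dvd_prod_of_mem t (mem_univ i))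

lemma gen_eq_erase (t : Fin (k+1) → ℕ) (htpos : ∀ i, 0 < t i) (i : Fin (k+1)) :
    gen t i = ∏ j ∈ univ.erase i, t j := by
  have h := Finset.mul_prod_erase univ t (mem_univ i)
  rw [gen, ← h, Nat.mul_div_cancel_left _ (htpos i)]

lemma dvd_gen (t : Fin (k+1) → ℕ) (htpos : ∀ i, 0 < t i) {i j : Fin (k+1)} (hij : i ≠ j) :
    t i ∣ gen t j := by
  rw [gen_eq_erase t htpos]
  exact Finset.dvd_prod_of_mem t (by simp [hij])

lemma coprime_gen (t : Fin (k+1) → ℕ) (htpos : ∀ i, 0 < t i)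
    (hcop : ∀ i j, i ≠ j → Nat.Coprime (t i) (t j)) (i : Fin (k+1)) :
    Nat.Coprime (t i) (gen t i) := by
  rw [gen_eq_erase t htpos]
  exact Nat.Coprime.prod_right fun j hj => hcop i j (fun h => (mem_erase.1 hj).1 h.symm)

lemma mod_eq_of_facs (t : Fin (k+1) → ℕ) (htpos : ∀ i, 0 < t i)
    (hcop : ∀ i j, i ≠ j → Nat.Coprime (t i) (t j)) {n : ℕ}
    {z z' : Fin (k+1) → ℕ} (hz : z ∈ facs (gen t) n) (hz' : z' ∈ facs (gen t) n)
    (i : Fin (k+1)) : z i % t i = z' i % t i := by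
  have key : ∀ w : Fin (k+1) → ℕ, w ∈ facs (gen t) n → n % t i = (w i * gen t i) % t i := by
    intro w hw
    have hsplit : n = w i * gen t i + ∑ j ∈ univ.erase i, w j * gen t j := by
      rw [Finset.add_sum_erase _ (fun j => w j * gen t j) (mem_univ i)]; exact hw.symm
    have hdvd : t i ∣ ∑ j ∈ univ.erase i, w j * gen t j := by
      refine Finset.dvd_sum fun j hj => Dvd.dvd.mul_left ?_ _
      exact dvd_gen t htpos (fun h => (mem_erase.1 hj).1 h.symm)
    obtain ⟨c, hc⟩ := hdvd
    rw [hsplit, hc, Nat.add_mul_mod_self_left]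
  have h1 := key z hz
  have h2 := key z' hz'
  have h3 : z i * gen t i ≡ z' i * gen t i [MOD t i] := by
    unfold Nat.ModEq; rw [← h1, ← h2]
  exact Nat.ModEq.cancel_right_of_coprime (coprime_gen t htpos hcop i) h3


/-- T(m): achievable `∑ tᵢ aᵢ` with `∑ aᵢ = m`. -/
def Tset (t : Fin (k+1) → ℕ) (m : ℕ) : Set ℕ :=
  (fun a : Fin (k+1) → ℕ => ∑ i, t i * a i) '' {a | ∑ i, a i = m}

lemma sum_mul_single (f : Fin (k+1) → ℕ) (j : Fin (k+1)) (c : ℕ) :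
    ∑ i, f i * (Pi.single j c : Fin (k+1) → ℕ) i = f j * c := by
  rw [Finset.sum_eq_single j]
  · simp
  · intro b _ hb; simp [Pi.single_eq_of_ne hb]
  · simp

lemma sum_single_mul (f : Fin (k+1) → ℕ) (j : Fin (k+1)) (c : ℕ) :
    ∑ i, (Pi.single j c : Fin (k+1) → ℕ) i * f i = c * f j := by
  rw [Finset.sum_eq_single j]
  · simp
  · intro b _ hb; simp [Pi.single_eq_of_ne hb]
  · simp

lemma single_mem_Tset (t : Fin (k+1) → ℕ) (m : ℕ) (j : Fin (k+1)) :
    t j * m ∈ Tset t m :=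
  ⟨Pi.single j m, by simp [Finset.sum_pi_single], sum_mul_single t j m⟩

lemma Tset_nonempty (t : Fin (k+1) → ℕ) (m : ℕ) : (Tset t m).Nonempty :=
  ⟨_, single_mem_Tset t m 0⟩

lemma Tset_subset (t : Fin (k+1) → ℕ) (hanti : StrictAnti t) (m : ℕ) :
    Tset t m ⊆ Set.Icc (m * t (Fin.last k)) (m * t 0) := by
  rintro x ⟨a, ha, rfl⟩
  simp only [Set.mem_setOf_eq] at ha
  constructor
  · calc m * t (Fin.last k) = ∑ i, a i * t (Fin.last k) := by
          rw [← Finset.sum_mul, ha]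
    _ ≤ ∑ i, t i * a i := Finset.sum_le_sum fun i _ => by
          rw [mul_comm]; exact Nat.mul_le_mul (hanti.antitone (Fin.le_last i)) le_rfl
  · calc ∑ i, t i * a i ≤ ∑ i, t 0 * a i :=
          Finset.sum_le_sum fun i _ => Nat.mul_le_mul (hanti.antitone (Fin.zero_le i)) le_rfl
    _ = m * t 0 := by rw [← Finset.mul_sum, ha, mul_comm]

lemma Tset_finite (t : Fin (k+1) → ℕ) (hanti : StrictAnti t) (m : ℕ) :
    (Tset t m).Finite :=
  Set.Finite.subset (Set.finite_Icc _ _) (Tset_subset t hanti m)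

lemma Tset_zero (t : Fin (k+1) → ℕ) : Tset t 0 = {0} := by
  ext x
  constructor
  · rintro ⟨a, ha, rfl⟩
    simp only [Set.mem_setOf_eq, Finset.sum_eq_zero_iff, mem_univ, forall_true_left] at ha
    simp only [Set.mem_singleton_iff]
    exact Finset.sum_eq_zero fun i _ => by rw [ha i, mul_zero]
  · rintro rfl
    exact ⟨0, by simp, by simp⟩

lemma Tset_ncard (t : Fin (k+1) → ℕ) (hanti : StrictAnti t) (m : ℕ) :
    k * m + 1 ≤ (Tset t m).ncard := by
  induction m with
  | zero => simp [Tset_zero]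
  | succ m ih =>
    classical
    set A : Set ℕ := (fun x => x + t (Fin.last k)) '' Tset t m with hA
    set B : Set ℕ := (fun i : Fin k => m * t 0 + t i.castSucc) '' Set.univ with hB
    have hAsub : A ⊆ Tset t (m+1) := by
      rintro _ ⟨x, ⟨a, ha, rfl⟩, rfl⟩
      refine ⟨a + Pi.single (Fin.last k) 1, ?_, ?_⟩
      · simp only [Set.mem_setOf_eq] at ha ⊢
        simp [Finset.sum_add_distrib, ha, Finset.sum_pi_single]
      · simp only [Pi.add_apply, mul_add, Finset.sum_add_distrib]
        rw [sum_mul_single t (Fin.last k) 1, mul_one]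
    have hBsub : B ⊆ Tset t (m+1) := by
      rintro _ ⟨i, -, rfl⟩
      refine ⟨Pi.single 0 m + Pi.single i.castSucc 1, ?_, ?_⟩
      · simp [Finset.sum_add_distrib, Finset.sum_pi_single]
      · simp only [Pi.add_apply, mul_add, Finset.sum_add_distrib]
        rw [sum_mul_single t 0 m, sum_mul_single t i.castSucc 1, mul_one, mul_comm]
    have hdisj : Disjoint A B := by
      rw [Set.disjoint_left]
      rintro _ ⟨x, hx, rfl⟩ ⟨i, -, hEq⟩
      have hx0 : x ≤ m * t 0 := (Tset_subset t hanti m hx).2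
      have hlt : t (Fin.last k) < t i.castSucc := hanti (Fin.castSucc_lt_last i)
      have hEq' : m * t 0 + t i.castSucc = x + t (Fin.last k) := hEq
      omega
    have hAcard : A.ncard = (Tset t m).ncard :=
      Set.ncard_image_of_injective _ (add_left_injective _)
    have hBcard : B.ncard = k := by
      rw [hB, Set.ncard_image_of_injective _ ?_, Set.ncard_univ, Nat.card_eq_fintype_card,
        Fintype.card_fin]
      intro i j hij
      have hij' : m * t 0 + t i.castSucc = m * t 0 + t j.castSucc := hij
      have := hanti.injective (Nat.add_left_cancel hij')
      exact Fin.castSucc_injective k this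
    have hfin : (Tset t (m+1)).Finite := Tset_finite t hanti (m+1)
    have hunion : (A ∪ B).ncard ≤ (Tset t (m+1)).ncard :=
      Set.ncard_le_ncard (Set.union_subset hAsub hBsub) hfin
    rw [Set.ncard_union_eq hdisj (hfin.subset hAsub) (hfin.subset hBsub), hAcard, hBcard]
      at hunion
    rw [Nat.mul_succ]
    omega


lemma sum_decomp (t : Fin (k+1) → ℕ) (htpos : ∀ i, 0 < t i) (r a : Fin (k+1) → ℕ) :
    ∑ i, (r i + t i * a i) * gen t i
      = (∑ i, r i * gen t i) + (∏ j, t j) * ∑ i, a i := by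
  have h : ∀ i : Fin (k+1), (r i + t i * a i) * gen t i
      = r i * gen t i + (∏ j, t j) * a i := by
    intro i
    rw [add_mul, ← gen_mul t htpos i]
    ring
  rw [Finset.sum_congr rfl fun i _ => h i, Finset.sum_add_distrib, ← Finset.mul_sum]

lemma facs_eq (t : Fin (k+1) → ℕ) (htpos : ∀ i, 0 < t i)
    (hcop : ∀ i j, i ≠ j → Nat.Coprime (t i) (t j)) {n : ℕ}
    {z₀ : Fin (k+1) → ℕ} (hz₀ : z₀ ∈ facs (gen t) n) :
    facs (gen t) n = {z | ∃ a : Fin (k+1) → ℕ, (∑ i, a i) = (∑ i, z₀ i / t i) ∧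
      z = fun i => z₀ i % t i + t i * a i} := by
  have hspos : 0 < ∏ j, t j := Finset.prod_pos fun j _ => htpos j
  have hz₀split : ∀ i, z₀ i = z₀ i % t i + t i * (z₀ i / t i) := by
    intro i; rw [Nat.mod_add_div]
  have hn₀ : n = (∑ i, (z₀ i % t i) * gen t i) + (∏ j, t j) * ∑ i, z₀ i / t i := by
    rw [← sum_decomp t htpos]
    rw [← hz₀.out]
    exact Finset.sum_congr rfl fun i _ => by rw [← hz₀split i]
  ext z
  constructor
  · intro hz
    refine ⟨fun i => z i / t i, ?_, ?_⟩
    · have hzsplit : ∀ i, z i = z₀ i % t i + t i * (z i / t i) := by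
        intro i
        rw [mod_eq_of_facs t htpos hcop hz₀ hz i, Nat.mod_add_div]
      have hn : n = (∑ i, (z₀ i % t i) * gen t i) + (∏ j, t j) * ∑ i, z i / t i := by
        rw [← sum_decomp t htpos, ← hz.out]
        exact Finset.sum_congr rfl fun i _ => by rw [← hzsplit i]
      have h5 := hn₀.symm.trans hn
      have h6 : (∏ j, t j) * (∑ i, z₀ i / t i) = (∏ j, t j) * (∑ i, z i / t i) :=
        Nat.add_left_cancel h5
      exact (Nat.eq_of_mul_eq_mul_left hspos h6).symm
    · funext i
      rw [mod_eq_of_facs t htpos hcop hz₀ hz i, Nat.mod_add_div]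
  · rintro ⟨a, ha, rfl⟩
    show ∑ i, (z₀ i % t i + t i * a i) * gen t i = n
    rw [sum_decomp t htpos, ha, ← hn₀]

lemma lengthSet_eq (t : Fin (k+1) → ℕ) (htpos : ∀ i, 0 < t i)
    (hcop : ∀ i j, i ≠ j → Nat.Coprime (t i) (t j)) {n : ℕ}
    {z₀ : Fin (k+1) → ℕ} (hz₀ : z₀ ∈ facs (gen t) n) :
    lengthSet (gen t) n
      = (fun x => (∑ i, z₀ i % t i) + x) '' Tset t (∑ i, z₀ i / t i) := by
  rw [lengthSet, facs_eq t htpos hcop hz₀]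
  ext x
  constructor
  · rintro ⟨z, ⟨a, ha, rfl⟩, rfl⟩
    exact ⟨∑ i, t i * a i, ⟨a, ha, rfl⟩, by simp [Finset.sum_add_distrib]⟩
  · rintro ⟨y, ⟨a, ha, rfl⟩, rfl⟩
    exact ⟨fun i => z₀ i % t i + t i * a i, ⟨a, ha, rfl⟩, by simp [Finset.sum_add_distrib]⟩

lemma Tset_one (t : Fin (k+1) → ℕ) : Tset t 1 = Set.range t := by
  ext x
  constructor
  · rintro ⟨a, ha, rfl⟩
    simp only [Set.mem_setOf_eq] at ha
    obtain ⟨j, hj⟩ : ∃ j, a j ≠ 0 := by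
      by_contra h
      push_neg at h
      rw [Finset.sum_eq_zero fun i _ => h i] at ha
      exact one_ne_zero ha.symm
    have hsplit := Finset.add_sum_erase univ a (mem_univ j)
    rw [ha] at hsplit
    have haj : a j = 1 ∧ ∑ i ∈ univ.erase j, a i = 0 := by omega
    have hzero : ∀ i ∈ univ.erase j, a i = 0 :=
      (Finset.sum_eq_zero_iff).1 haj.2
    refine ⟨j, ?_⟩
    show t j = ∑ i, t i * a i
    rw [Finset.sum_eq_single j]
    · rw [haj.1, mul_one]
    · intro b _ hb
      rw [hzero b (by simp [hb]), mul_zero]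
    · simp
  · rintro ⟨j, rfl⟩
    have := single_mem_Tset t 1 j
    rwa [mul_one] at this

/-- The key inequality for a single element. -/
lemma LD_lower (t : Fin (k+1) → ℕ) (hk : 1 ≤ k) (hanti : StrictAnti t)
    (htpos : ∀ i, 0 < t i) (hcop : ∀ i j, i ≠ j → Nat.Coprime (t i) (t j))
    (n : ℕ) (hn : 2 ≤ (lengthSet (gen t) n).ncard) :
    (k : ℝ) / ((t 0 : ℝ) - (t (Fin.last k) : ℝ)) ≤ LD (gen t) n := by
  classical
  -- extract a factorization
  have hLne : (lengthSet (gen t) n).Nonempty := by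
    rcases Set.eq_empty_or_nonempty (lengthSet (gen t) n) with h | h
    · rw [h] at hn; simp at hn
    · exact h
  have hfne : (facs (gen t) n).Nonempty := by
    obtain ⟨x, z₀, hz₀, -⟩ := hLne
    exact ⟨z₀, hz₀⟩
  obtain ⟨z₀, hz₀⟩ := hfne
  set R := ∑ i, z₀ i % t i with hR
  set m := ∑ i, z₀ i / t i with hm
  have hLeq := lengthSet_eq t htpos hcop hz₀
  set L := lengthSet (gen t) n with hL
  have hTfin := Tset_finite t hanti m
  have hLfin : L.Finite := by rw [hLeq]; exact hTfin.image _
  have hLcard : L.ncard = (Tset t m).ncard := by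
    rw [hLeq]; exact Set.ncard_image_of_injective _ (fun a b h => by omega)
  -- m ≥ 1
  have hm1 : 1 ≤ m := by
    by_contra h
    push_neg at h
    interval_cases m
    rw [hLcard, Tset_zero] at hn
    simp at hn
  -- cardinality
  have hcard : k * m + 1 ≤ L.ncard := by rw [hLcard]; exact Tset_ncard t hanti m
  -- sup bound
  have hsup : sSup L ≤ R + m * t 0 := by
    apply csSup_le hLne
    intro b hb
    rw [hLeq] at hb
    obtain ⟨y, hy, rfl⟩ := hb
    exact Nat.add_le_add_left ((Tset_subset t hanti m hy).2) R
  -- inf bound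
  have hinf : R + m * t (Fin.last k) ≤ sInf L := by
    apply le_csInf hLne
    intro b hb
    rw [hLeq] at hb
    obtain ⟨y, hy, rfl⟩ := hb
    exact Nat.add_le_add_left ((Tset_subset t hanti m hy).1) R
  -- sup > inf
  have hlt : sInf L < sSup L := by
    obtain ⟨x, hx, y, hy, hxy⟩ := (Set.one_lt_ncard hLfin).1 (by omega)
    have h1 : sInf L ≤ x := csInf_le (OrderBot.bddBelow L) hx
    have h2 : sInf L ≤ y := csInf_le (OrderBot.bddBelow L) hy
    have h3 : x ≤ sSup L := le_csSup hLfin.bddAbove hx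
    have h4 : y ≤ sSup L := le_csSup hLfin.bddAbove hy
    omega
  -- real arithmetic
  have htlt : t (Fin.last k) < t 0 := by
    apply hanti
    rw [Fin.lt_iff_val_lt_val]
    simpa using (show 0 < k by omega)
  rw [LD]
  have hdt : (0 : ℝ) < (t 0 : ℝ) - (t (Fin.last k) : ℝ) :=
    sub_pos.2 (by exact_mod_cast htlt)
  have hd : (0 : ℝ) < ((sSup L : ℕ) : ℝ) - ((sInf L : ℕ) : ℝ) :=
    sub_pos.2 (by exact_mod_cast hlt)
  rw [div_le_div_iff₀ hdt hd]
  have h1 : ((sSup L : ℕ) : ℝ) ≤ (R : ℝ) + (m : ℝ) * (t 0 : ℝ) := by exact_mod_cast hsup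
  have h2 : (R : ℝ) + (m : ℝ) * (t (Fin.last k) : ℝ) ≤ ((sInf L : ℕ) : ℝ) := by exact_mod_cast hinf
  have hA : ((sSup L : ℕ) : ℝ) - ((sInf L : ℕ) : ℝ)
      ≤ (m : ℝ) * (t 0 : ℝ) - (m : ℝ) * (t (Fin.last k) : ℝ) := by linarith
  have hB : (k : ℝ) * (m : ℝ) ≤ (L.ncard : ℝ) - 1 := by
    have : ((k * m + 1 : ℕ) : ℝ) ≤ (L.ncard : ℝ) := Nat.cast_le.2 hcard
    push_cast at this
    linarith
  have e1 : (k : ℝ) * (((sSup L : ℕ) : ℝ) - ((sInf L : ℕ) : ℝ))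
      ≤ (k : ℝ) * ((m : ℝ) * (t 0 : ℝ) - (m : ℝ) * (t (Fin.last k) : ℝ)) :=
    mul_le_mul_of_nonneg_left hA (Nat.cast_nonneg k)
  have e2 : (k : ℝ) * (m : ℝ) * ((t 0 : ℝ) - (t (Fin.last k) : ℝ))
      ≤ ((L.ncard : ℝ) - 1) * ((t 0 : ℝ) - (t (Fin.last k) : ℝ)) :=
    mul_le_mul_of_nonneg_right hB hdt.le
  nlinarith [e1, e2]

theorem stmt6 (k : ℕ) (hk : 1 ≤ k) (t : Fin (k + 1) → ℕ)
    (hanti : StrictAnti t) (ht : ∀ i, 1 < t i)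
    (hcop : ∀ i j, i ≠ j → Nat.Coprime (t i) (t j)) :
    (∀ n : ℕ, 2 ≤ (lengthSet (fun i => (∏ j, t j) / t i) n).ncard →
        (k : ℝ) / ((t 0 : ℝ) - (t (Fin.last k) : ℝ)) ≤
          LD (fun i => (∏ j, t j) / t i) n) ∧
      LDsgp (fun i => (∏ j, t j) / t i) =
        (k : ℝ) / ((t 0 : ℝ) - (t (Fin.last k) : ℝ)) := by
  classical
  have htpos : ∀ i, 0 < t i := fun i => lt_trans Nat.zero_lt_one (ht i)
  have hgen : (fun i => (∏ j, t j) / t i) = gen t := rfl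
  rw [hgen]
  set q : ℝ := (k : ℝ) / ((t 0 : ℝ) - (t (Fin.last k) : ℝ)) with hq
  refine ⟨fun n hn => LD_lower t hk hanti htpos hcop n hn, ?_⟩
  -- length set of the Betti element
  set s : ℕ := ∏ j, t j with hs
  set z₀ : Fin (k+1) → ℕ := Pi.single (Fin.last k) (t (Fin.last k)) with hz₀def
  have hz₀ : z₀ ∈ facs (gen t) s := by
    show ∑ i, z₀ i * gen t i = s
    rw [hz₀def, sum_single_mul (gen t) (Fin.last k) (t (Fin.last k)), mul_comm,
      gen_mul t htpos]
  have hRzero : (∑ i, z₀ i % t i) = 0 := by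
    refine Finset.sum_eq_zero fun i _ => ?_
    by_cases h : i = Fin.last k
    · subst h; simp [hz₀def]
    · simp [hz₀def, Pi.single_eq_of_ne h]
  have hmone : (∑ i, z₀ i / t i) = 1 := by
    rw [Finset.sum_eq_single (Fin.last k)]
    · simp [hz₀def, Nat.div_self (htpos (Fin.last k))]
    · intro b _ hb; simp [hz₀def, Pi.single_eq_of_ne hb]
    · simp
  have hLs : lengthSet (gen t) s = Tset t 1 := by
    rw [lengthSet_eq t htpos hcop hz₀, hRzero, hmone]
    simp
  have hc : (Tset t 1).ncard = k + 1 := by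
    rw [Tset_one, ← Set.image_univ, Set.ncard_image_of_injective _ hanti.injective,
      Set.ncard_univ, Nat.card_eq_fintype_card, Fintype.card_fin]
  have hfin1 : (Tset t 1).Finite := Tset_finite t hanti 1
  have hsup : sSup (Tset t 1) = t 0 := by
    refine le_antisymm (csSup_le (Tset_nonempty t 1) fun b hb => ?_)
      (le_csSup hfin1.bddAbove (by simpa using single_mem_Tset t 1 0))
    have := (Tset_subset t hanti 1 hb).2
    omega
  have hinf : sInf (Tset t 1) = t (Fin.last k) := by
    refine le_antisymm (csInf_le (OrderBot.bddBelow _)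
      (by simpa using single_mem_Tset t 1 (Fin.last k)))
      (le_csInf (Tset_nonempty t 1) fun b hb => ?_)
    have := (Tset_subset t hanti 1 hb).1
    omega
  have hLD : LD (gen t) s = q := by
    rw [LD, hLs, hsup, hinf, hc, hq]
    push_cast
    ring_nf
  have hmem : q ∈ {x : ℝ | ∃ n : ℕ, 2 ≤ (lengthSet (gen t) n).ncard ∧ x = LD (gen t) n} :=
    ⟨s, by rw [hLs, hc]; omega, hLD.symm⟩
  have hlb : ∀ x ∈ {x : ℝ | ∃ n : ℕ, 2 ≤ (lengthSet (gen t) n).ncard ∧ x = LD (gen t) n},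
      q ≤ x := by
    rintro x ⟨n, hn2, rfl⟩
    exact LD_lower t hk hanti htpos hcop n hn2
  exact le_antisymm (csInf_le ⟨q, hlb⟩ hmem) (le_csInf ⟨q, hmem⟩ hlb)
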